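/- In the partial crossed product H_ss # H4 arising from the twisted partial action, the elements 1#1, e1#1, e2#1, e3#1, 1#gv, e1#gv, e2#gv, e3#gv form a basis of the vector space H_ss #_(·,ω) H4 = (H_ss ⊗ H4)(1 ⊗ 1); in particular this crossed product has dimension 8. -/

import Mathlib

open Quaternion TensorProduct

noncomputable section

/-- Sweedler's Hopf algebra `H₄` as a vector space over `ℝ`,
with basis `1, g, ν, gν` indexed by `Fin 4`. -/
abbrev H4 := Fin 4 → ℝ

namespace H4

/-- The canonical basis `1, g, ν, gν` of Sweedler's Hopf algebra. -/
def B : Module.Basis (Fin 4) ℝ H4 := Pi.basisFun ℝ (Fin 4)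

/-- The unit `1` of `H₄`. -/
def u : H4 := B 0
/-- The grouplike element `g` of `H₄`. -/
def g : H4 := B 1
/-- The element `ν` of `H₄`. -/
def v : H4 := B 2
/-- The element `gν` of `H₄`. -/
def w : H4 := B 3

/-- The multiplication of Sweedler's Hopf algebra, as a bilinear map:
`g² = 1`, `ν² = 0`, `gν = -νg`. -/
def mul4 : H4 →ₗ[ℝ] H4 →ₗ[ℝ] H4 :=
  B.constr ℝ ![B.constr ℝ ![u, g, v, w],
               B.constr ℝ ![g, u, w, v],
               B.constr ℝ ![v, -w, 0, 0],
               B.constr ℝ ![w, -v, 0, 0]]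

/-- The comultiplication of Sweedler's Hopf algebra:
`Δ(1) = 1⊗1`, `Δ(g) = g⊗g`, `Δ(ν) = g⊗ν + ν⊗1`, `Δ(gν) = 1⊗gν + gν⊗g`. -/
def Δ : H4 →ₗ[ℝ] H4 ⊗[ℝ] H4 :=
  B.constr ℝ ![u ⊗ₜ u, g ⊗ₜ g, g ⊗ₜ v + v ⊗ₜ u, u ⊗ₜ w + w ⊗ₜ g]

end H4

/-- The split semi-quaternion algebra `H_ss`:
`e1² = 1`, `e2² = 0`, `e3² = 0`, `e1e2 = e3 = -e2e1`,
`e2e3 = 0 = -e3e2`, `e3e1 = -e2 = -e1e3`. -/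
abbrev Hss := ℍ[ℝ, 1, 0]

namespace Hss
def e1 : Hss := ⟨0, 1, 0, 0⟩
def e2 : Hss := ⟨0, 0, 1, 0⟩
def e3 : Hss := ⟨0, 0, 0, 1⟩
/-- The basis `1, e1, e2, e3` of the split semi-quaternion algebra. -/
def Qb : Module.Basis (Fin 4) ℝ Hss := QuaternionAlgebra.basisOneIJK 1 0 0
end Hss

variable (k1 k2 k3 k4 l1 l2 l3 l4 : ℝ)

/-- The value `ν · 1 = ω(1,ν) = ω(ν,1) = k₁ + k₂e₁ + k₃e₂ - k₄e₃`. -/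
def nu1 : Hss := k1 • 1 + k2 • Hss.e1 + k3 • Hss.e2 - k4 • Hss.e3

/-- The value `gν · 1 = ω(1,gν) = ω(gν,1) = l₁ + l₂e₁ + l₃e₂ + l₄e₃`. -/
def gnu1 : Hss := l1 • 1 + l2 • Hss.e1 + l3 • Hss.e2 + l4 • Hss.e3

/-- The partial action `· : H₄ ⊗ H_ss → H_ss` from the paper:
`1` acts as the identity, `g · x = 0`, and `ν`, `gν` act via the parameters
`k₁,…,k₄,l₁,…,l₄` as in the table. -/
def actSS : H4 →ₗ[ℝ] Hss →ₗ[ℝ] Hss :=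
  H4.B.constr ℝ
    ![LinearMap.id, 0,
      Hss.Qb.constr ℝ
        ![nu1 k1 k2 k3 k4,
          k2 • 1 + k1 • Hss.e1 + k4 • Hss.e2 - k3 • Hss.e3,
          k1 • Hss.e2 + k2 • Hss.e3,
          k2 • Hss.e2 + k1 • Hss.e3],
      Hss.Qb.constr ℝ
        ![gnu1 l1 l2 l3 l4,
          l2 • 1 + l1 • Hss.e1 + l4 • Hss.e2 + l3 • Hss.e3,
          l1 • Hss.e2 - l2 • Hss.e3,
          -l2 • Hss.e2 + l1 • Hss.e3]]

/-- The value `ω(ν,ν) = (k₁²+k₂²) + 2k₁k₂e₁ + 2k₁k₃e₂ - 2k₁k₄e₃`. -/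
def omvv : Hss :=
  (k1 ^ 2 + k2 ^ 2) • 1 + (2 * k1 * k2) • Hss.e1
    + (2 * k1 * k3) • Hss.e2 - (2 * k1 * k4) • Hss.e3

/-- The value `ω(ν,gν) = ω(gν,ν)`. -/
def omvw : Hss :=
  (k1 * l1 + k2 * l2) • 1 + (k2 * l1 + k1 * l2) • Hss.e1
    + (k3 * l1 + k4 * l2 + k1 * l3 + k2 * l4) • Hss.e2
    + (-(k4 * l1) - k3 * l2 + k2 * l3 + k1 * l4) • Hss.e3

/-- The cocycle `ω : H₄ ⊗ H₄ → H_ss` from the paper's table. -/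
def omSS : H4 →ₗ[ℝ] H4 →ₗ[ℝ] Hss :=
  H4.B.constr ℝ
    ![H4.B.constr ℝ ![1, 0, nu1 k1 k2 k3 k4, gnu1 l1 l2 l3 l4],
      0,
      H4.B.constr ℝ ![nu1 k1 k2 k3 k4, 0, omvv k1 k2 k3 k4,
        omvw k1 k2 k3 k4 l1 l2 l3 l4],
      H4.B.constr ℝ ![gnu1 l1 l2 l3 l4, 0,
        omvw k1 k2 k3 k4 l1 l2 l3 l4, 0]]

/-- The map `h ↦ (h₁·1) ⊗ h₂` of `H₄` into `H_ss ⊗ H₄`. -/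
def sharpAux : H4 →ₗ[ℝ] Hss ⊗[ℝ] H4 :=
  (TensorProduct.map ((actSS k1 k2 k3 k4 l1 l2 l3 l4).flip 1) LinearMap.id) ∘ₗ H4.Δ

/-- The bilinear map `(a, h) ↦ a ♯ h = a(h₁·1) ⊗ h₂` defining the elements of the
partial crossed product `H_ss ♯ H₄ = (H_ss ⊗ H₄)(1 ⊗ 1)`. -/
def sharpSS : Hss →ₗ[ℝ] H4 →ₗ[ℝ] Hss ⊗[ℝ] H4 :=
  ((LinearMap.llcomp ℝ H4 (Hss ⊗[ℝ] H4) (Hss ⊗[ℝ] H4)).flip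
      (sharpAux k1 k2 k3 k4 l1 l2 l3 l4)) ∘ₗ
    LinearMap.rTensorHom H4 ∘ₗ LinearMap.mul ℝ Hss

lemma QbZero : Hss.Qb 0 = 1 := by
  apply Hss.Qb.repr.injective
  ext i
  fin_cases i <;> simp [Hss.Qb, QuaternionAlgebra.coe_basisOneIJK_repr]

lemma act_u : actSS k1 k2 k3 k4 l1 l2 l3 l4 H4.u = LinearMap.id := by
  show actSS k1 k2 k3 k4 l1 l2 l3 l4 (H4.B 0) = LinearMap.id
  simp [actSS, Module.Basis.constr_basis]
lemma act_g : actSS k1 k2 k3 k4 l1 l2 l3 l4 H4.g = 0 := by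
  show actSS k1 k2 k3 k4 l1 l2 l3 l4 (H4.B 1) = 0
  simp [actSS, Module.Basis.constr_basis]
lemma act_v_one : actSS k1 k2 k3 k4 l1 l2 l3 l4 H4.v 1 = nu1 k1 k2 k3 k4 := by
  show actSS k1 k2 k3 k4 l1 l2 l3 l4 (H4.B 2) 1 = _
  rw [← QbZero]
  simp [actSS, Module.Basis.constr_basis]
lemma act_w_one : actSS k1 k2 k3 k4 l1 l2 l3 l4 H4.w 1 = gnu1 l1 l2 l3 l4 := by
  show actSS k1 k2 k3 k4 l1 l2 l3 l4 (H4.B 3) 1 = _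
  rw [← QbZero]
  simp [actSS, Module.Basis.constr_basis]

lemma Δ_u : H4.Δ H4.u = H4.u ⊗ₜ H4.u := by
  rw [show H4.Δ H4.u = H4.Δ (H4.B 0) from rfl, H4.Δ, Module.Basis.constr_basis]; rfl
lemma Δ_g : H4.Δ H4.g = H4.g ⊗ₜ H4.g := by
  rw [show H4.Δ H4.g = H4.Δ (H4.B 1) from rfl, H4.Δ, Module.Basis.constr_basis]; rfl
lemma Δ_v : H4.Δ H4.v = H4.g ⊗ₜ H4.v + H4.v ⊗ₜ H4.u := by
  rw [show H4.Δ H4.v = H4.Δ (H4.B 2) from rfl, H4.Δ, Module.Basis.constr_basis]; rfl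
lemma Δ_w : H4.Δ H4.w = H4.u ⊗ₜ H4.w + H4.w ⊗ₜ H4.g := by
  rw [show H4.Δ H4.w = H4.Δ (H4.B 3) from rfl, H4.Δ, Module.Basis.constr_basis]; rfl

lemma sharpAux_u : sharpAux k1 k2 k3 k4 l1 l2 l3 l4 H4.u = (1:Hss) ⊗ₜ H4.u := by
  rw [sharpAux, LinearMap.comp_apply, Δ_u]
  simp [act_u]
lemma sharpAux_g : sharpAux k1 k2 k3 k4 l1 l2 l3 l4 H4.g = 0 := by
  rw [sharpAux, LinearMap.comp_apply, Δ_g, TensorProduct.map_tmul, LinearMap.flip_apply,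
    act_g, LinearMap.zero_apply, TensorProduct.zero_tmul]
lemma sharpAux_v : sharpAux k1 k2 k3 k4 l1 l2 l3 l4 H4.v = nu1 k1 k2 k3 k4 ⊗ₜ H4.u := by
  rw [sharpAux, LinearMap.comp_apply, Δ_v, map_add]
  simp [act_g, act_v_one]
lemma sharpAux_w : sharpAux k1 k2 k3 k4 l1 l2 l3 l4 H4.w
    = (1:Hss) ⊗ₜ H4.w + gnu1 l1 l2 l3 l4 ⊗ₜ H4.g := by
  rw [sharpAux, LinearMap.comp_apply, Δ_w, map_add]
  simp only [TensorProduct.map_tmul, LinearMap.flip_apply, LinearMap.id_coe, id_eq,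
    act_u, act_w_one]

lemma sharpSS_apply (a : Hss) (h : H4) : sharpSS k1 k2 k3 k4 l1 l2 l3 l4 a h
    = (LinearMap.rTensor H4 (LinearMap.mulLeft ℝ a)) (sharpAux k1 k2 k3 k4 l1 l2 l3 l4 h) := rfl

lemma sharp_u (a : Hss) : sharpSS k1 k2 k3 k4 l1 l2 l3 l4 a H4.u = a ⊗ₜ H4.u := by
  rw [sharpSS_apply, sharpAux_u]; simp
lemma sharp_g (a : Hss) : sharpSS k1 k2 k3 k4 l1 l2 l3 l4 a H4.g = 0 := by
  rw [sharpSS_apply, sharpAux_g]; exact LinearMap.map_zero _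
lemma sharp_v (a : Hss) : sharpSS k1 k2 k3 k4 l1 l2 l3 l4 a H4.v
    = (a * nu1 k1 k2 k3 k4) ⊗ₜ H4.u := by
  rw [sharpSS_apply, sharpAux_v]; simp [LinearMap.mulLeft_apply]
lemma sharp_w (a : Hss) : sharpSS k1 k2 k3 k4 l1 l2 l3 l4 a H4.w
    = a ⊗ₜ H4.w + (a * gnu1 l1 l2 l3 l4) ⊗ₜ H4.g := by
  rw [sharpSS_apply, sharpAux_w, map_add]
  simp [LinearMap.mulLeft_apply]
lemma Qb_repr (q : Hss) (i : Fin 4) :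
    Hss.Qb.repr q i = ![q.re, q.imI, q.imJ, q.imK] i :=
  congrFun (QuaternionAlgebra.coe_basisOneIJK_repr (R := ℝ) (c₁ := 1) (c₂ := 0) (c₃ := 0) q) i

lemma QbOne : Hss.Qb 1 = Hss.e1 := by
  apply Hss.Qb.repr.injective; ext i
  fin_cases i <;> simp [Qb_repr, Hss.e1]
lemma QbTwo : Hss.Qb 2 = Hss.e2 := by
  apply Hss.Qb.repr.injective; ext i
  fin_cases i <;> simp [Qb_repr, Hss.e2]
lemma QbThree : Hss.Qb 3 = Hss.e3 := by
  apply Hss.Qb.repr.injective; ext i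
  fin_cases i <;> simp [Qb_repr, Hss.e3]

lemma mem_of_basis {M N : Type*} [AddCommGroup M] [Module ℝ M] [AddCommGroup N]
    [Module ℝ N] {ι : Type*} (b : Module.Basis ι ℝ M) (φ : M →ₗ[ℝ] N) (p : Submodule ℝ N)
    (H : ∀ i, φ (b i) ∈ p) (x : M) : φ x ∈ p := by
  have h1 : Submodule.span ℝ (Set.range b) ≤ p.comap φ :=
    Submodule.span_le.2 (by rintro _ ⟨i, rfl⟩; exact H i)
  rw [b.span_eq] at h1; exact h1 Submodule.mem_top

def fIdx : Fin 8 → Fin 4 × Fin 4 := ![(0,0),(1,0),(2,0),(3,0),(0,3),(1,3),(2,3),(3,3)]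

def Tb : Module.Basis (Fin 4 × Fin 4) ℝ (Hss ⊗[ℝ] H4) := Hss.Qb.tensorProduct H4.B

def Lmap : (Hss ⊗[ℝ] H4) →ₗ[ℝ] (Fin 8 → ℝ) := LinearMap.pi (fun r => Tb.coord (fIdx r))

lemma Lmap_tmul (q : Hss) (h : H4) (r : Fin 8) :
    Lmap (q ⊗ₜ h) r = ![q.re, q.imI, q.imJ, q.imK] (fIdx r).1 * h (fIdx r).2 := by
  rw [Lmap, LinearMap.pi_apply, Module.Basis.coord_apply, Tb,
    Module.Basis.tensorProduct_repr_tmul_apply, Qb_repr]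
  rw [show H4.B = Pi.basisFun ℝ (Fin 4) from rfl, Pi.basisFun_repr, smul_eq_mul, mul_comm]

example : Lmap (Hss.e1 ⊗ₜ H4.u) 1 = 1 := by
  simp [Lmap_tmul, fIdx, Hss.e1, H4.u, H4.B, Pi.basisFun_apply]
lemma H4_apply (i j : Fin 4) : H4.B i j = if j = i then 1 else 0 := by
  rw [show H4.B = Pi.basisFun ℝ (Fin 4) from rfl, Pi.basisFun_apply, Pi.single_apply]
lemma u_val (j : Fin 4) : H4.u j = if j = 0 then 1 else 0 := H4_apply 0 j
lemma g_val (j : Fin 4) : H4.g j = if j = 1 then 1 else 0 := H4_apply 1 j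
lemma w_val (j : Fin 4) : H4.w j = if j = 3 then 1 else 0 := H4_apply 3 j

lemma fIdx0 : fIdx 0 = (0,0) := rfl
lemma fIdx1 : fIdx 1 = (1,0) := rfl
lemma fIdx2 : fIdx 2 = (2,0) := rfl
lemma fIdx3 : fIdx 3 = (3,0) := rfl
lemma fIdx4 : fIdx 4 = (0,3) := rfl
lemma fIdx5 : fIdx 5 = (1,3) := rfl
lemma fIdx6 : fIdx 6 = (2,3) := rfl
lemma fIdx7 : fIdx 7 = (3,3) := rfl

example : Lmap ((1:Hss) ⊗ₜ H4.u) = Pi.basisFun ℝ (Fin 8) 0 := by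
  funext s
  fin_cases s <;>
    simp [Lmap_tmul, fIdx0, fIdx1, fIdx2, fIdx3, fIdx4, fIdx5, fIdx6, fIdx7,
      u_val, Pi.basisFun_apply, Pi.single_apply]

lemma Lmap_sharp_u (q : Hss) (s : Fin 8) :
    Lmap (sharpSS k1 k2 k3 k4 l1 l2 l3 l4 q H4.u) s
      = ![q.re, q.imI, q.imJ, q.imK] (fIdx s).1 * (if (fIdx s).2 = 0 then 1 else 0) := by
  rw [sharp_u, Lmap_tmul, u_val]

lemma Lmap_sharp_w (q : Hss) (s : Fin 8) :
    Lmap (sharpSS k1 k2 k3 k4 l1 l2 l3 l4 q H4.w) s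
      = ![q.re, q.imI, q.imJ, q.imK] (fIdx s).1 * (if (fIdx s).2 = 3 then 1 else 0) := by
  rw [sharp_w, map_add, Pi.add_apply, Lmap_tmul, Lmap_tmul, w_val, g_val]
  have : ((fIdx s).2 = 1) = False := by
    fin_cases s <;> simp [fIdx0, fIdx1, fIdx2, fIdx3, fIdx4, fIdx5, fIdx6, fIdx7]
  simp only [this, if_false, mul_zero, add_zero]

lemma Lmap_F (i : Fin 4) (c : Fin 2) (q : Hss)
    (hq : ∀ j, Hss.Qb.repr q j = if j = i then 1 else 0) :
    Lmap (sharpSS k1 k2 k3 k4 l1 l2 l3 l4 q (![H4.u, H4.w] c))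
      = Pi.basisFun ℝ (Fin 8) (![![0,1,2,3],![4,5,6,7]] c i) := by
  have hq' : ∀ j, (![q.re, q.imI, q.imJ, q.imK] j : ℝ) = if j = i then 1 else 0 := by
    intro j; rw [← Qb_repr]; exact hq j
  funext s
  fin_cases c <;> fin_cases i <;>
  · fin_cases s <;>
      simp [Lmap_sharp_u, Lmap_sharp_w, fIdx0, fIdx1, fIdx2, fIdx3, fIdx4, fIdx5,
        fIdx6, fIdx7, hq', Pi.basisFun_apply, Pi.single_apply]

theorem sharpSS_indep :
    LinearIndependent ℝ
      ![(sharpSS k1 k2 k3 k4 l1 l2 l3 l4) 1 H4.u, (sharpSS k1 k2 k3 k4 l1 l2 l3 l4) Hss.e1 H4.u, (sharpSS k1 k2 k3 k4 l1 l2 l3 l4) Hss.e2 H4.u, (sharpSS k1 k2 k3 k4 l1 l2 l3 l4) Hss.e3 H4.u,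
        (sharpSS k1 k2 k3 k4 l1 l2 l3 l4) 1 H4.w, (sharpSS k1 k2 k3 k4 l1 l2 l3 l4) Hss.e1 H4.w, (sharpSS k1 k2 k3 k4 l1 l2 l3 l4) Hss.e2 H4.w, (sharpSS k1 k2 k3 k4 l1 l2 l3 l4) Hss.e3 H4.w] := by
  apply LinearIndependent.of_comp Lmap
  have h1 : ∀ j, Hss.Qb.repr (1 : Hss) j = if j = 0 then 1 else 0 := by
    intro j; rw [Qb_repr]; fin_cases j <;> simp
  have he1 : ∀ j, Hss.Qb.repr Hss.e1 j = if j = 1 then 1 else 0 := by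
    intro j; rw [Qb_repr]; fin_cases j <;> simp [Hss.e1]
  have he2 : ∀ j, Hss.Qb.repr Hss.e2 j = if j = 2 then 1 else 0 := by
    intro j; rw [Qb_repr]; fin_cases j <;> simp [Hss.e2]
  have he3 : ∀ j, Hss.Qb.repr Hss.e3 j = if j = 3 then 1 else 0 := by
    intro j; rw [Qb_repr]; fin_cases j <;> simp [Hss.e3]
  have key : ⇑Lmap ∘
      ![(sharpSS k1 k2 k3 k4 l1 l2 l3 l4) 1 H4.u, (sharpSS k1 k2 k3 k4 l1 l2 l3 l4) Hss.e1 H4.u, (sharpSS k1 k2 k3 k4 l1 l2 l3 l4) Hss.e2 H4.u, (sharpSS k1 k2 k3 k4 l1 l2 l3 l4) Hss.e3 H4.u,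
        (sharpSS k1 k2 k3 k4 l1 l2 l3 l4) 1 H4.w, (sharpSS k1 k2 k3 k4 l1 l2 l3 l4) Hss.e1 H4.w, (sharpSS k1 k2 k3 k4 l1 l2 l3 l4) Hss.e2 H4.w, (sharpSS k1 k2 k3 k4 l1 l2 l3 l4) Hss.e3 H4.w]
      = ⇑(Pi.basisFun ℝ (Fin 8)) := by
    funext r
    rw [Function.comp_apply]
    fin_cases r
    · exact Lmap_F k1 k2 k3 k4 l1 l2 l3 l4 0 0 1 h1
    · exact Lmap_F k1 k2 k3 k4 l1 l2 l3 l4 1 0 Hss.e1 he1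
    · exact Lmap_F k1 k2 k3 k4 l1 l2 l3 l4 2 0 Hss.e2 he2
    · exact Lmap_F k1 k2 k3 k4 l1 l2 l3 l4 3 0 Hss.e3 he3
    · exact Lmap_F k1 k2 k3 k4 l1 l2 l3 l4 0 1 1 h1
    · exact Lmap_F k1 k2 k3 k4 l1 l2 l3 l4 1 1 Hss.e1 he1
    · exact Lmap_F k1 k2 k3 k4 l1 l2 l3 l4 2 1 Hss.e2 he2
    · exact Lmap_F k1 k2 k3 k4 l1 l2 l3 l4 3 1 Hss.e3 he3
  rw [key]
  exact (Pi.basisFun ℝ (Fin 8)).linearIndependent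

theorem sharpSS_span :
    Submodule.span ℝ (Set.range
      ![(sharpSS k1 k2 k3 k4 l1 l2 l3 l4) 1 H4.u, (sharpSS k1 k2 k3 k4 l1 l2 l3 l4) Hss.e1 H4.u, (sharpSS k1 k2 k3 k4 l1 l2 l3 l4) Hss.e2 H4.u, (sharpSS k1 k2 k3 k4 l1 l2 l3 l4) Hss.e3 H4.u,
        (sharpSS k1 k2 k3 k4 l1 l2 l3 l4) 1 H4.w, (sharpSS k1 k2 k3 k4 l1 l2 l3 l4) Hss.e1 H4.w, (sharpSS k1 k2 k3 k4 l1 l2 l3 l4) Hss.e2 H4.w, (sharpSS k1 k2 k3 k4 l1 l2 l3 l4) Hss.e3 H4.w]) =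
      Submodule.span ℝ {x : Hss ⊗[ℝ] H4 | ∃ (a : Hss) (h : H4), x = (sharpSS k1 k2 k3 k4 l1 l2 l3 l4) a h} := by
  apply le_antisymm
  · rw [Submodule.span_le]
    rintro x ⟨r, rfl⟩
    fin_cases r
    · exact Submodule.subset_span ⟨1, H4.u, rfl⟩
    · exact Submodule.subset_span ⟨Hss.e1, H4.u, rfl⟩
    · exact Submodule.subset_span ⟨Hss.e2, H4.u, rfl⟩
    · exact Submodule.subset_span ⟨Hss.e3, H4.u, rfl⟩
    · exact Submodule.subset_span ⟨1, H4.w, rfl⟩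
    · exact Submodule.subset_span ⟨Hss.e1, H4.w, rfl⟩
    · exact Submodule.subset_span ⟨Hss.e2, H4.w, rfl⟩
    · exact Submodule.subset_span ⟨Hss.e3, H4.w, rfl⟩
  · rw [Submodule.span_le]
    rintro x ⟨a, h, rfl⟩
    have hu : ∀ b : Hss, sharpSS k1 k2 k3 k4 l1 l2 l3 l4 b H4.u ∈ Submodule.span ℝ (Set.range
      ![(sharpSS k1 k2 k3 k4 l1 l2 l3 l4) 1 H4.u, (sharpSS k1 k2 k3 k4 l1 l2 l3 l4) Hss.e1 H4.u, (sharpSS k1 k2 k3 k4 l1 l2 l3 l4) Hss.e2 H4.u, (sharpSS k1 k2 k3 k4 l1 l2 l3 l4) Hss.e3 H4.u,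
        (sharpSS k1 k2 k3 k4 l1 l2 l3 l4) 1 H4.w, (sharpSS k1 k2 k3 k4 l1 l2 l3 l4) Hss.e1 H4.w, (sharpSS k1 k2 k3 k4 l1 l2 l3 l4) Hss.e2 H4.w, (sharpSS k1 k2 k3 k4 l1 l2 l3 l4) Hss.e3 H4.w]) := by
      intro b
      refine mem_of_basis Hss.Qb ((sharpSS k1 k2 k3 k4 l1 l2 l3 l4).flip H4.u) _ ?_ b
      intro i
      rw [LinearMap.flip_apply]
      fin_cases i
      · exact Submodule.subset_span ⟨0, by rw [show Hss.Qb ⟨0, by omega⟩ = (1 : Hss) from QbZero]; rfl⟩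
      · exact Submodule.subset_span ⟨1, by rw [show Hss.Qb ⟨1, by omega⟩ = Hss.e1 from QbOne]; rfl⟩
      · exact Submodule.subset_span ⟨2, by rw [show Hss.Qb ⟨2, by omega⟩ = Hss.e2 from QbTwo]; rfl⟩
      · exact Submodule.subset_span ⟨3, by rw [show Hss.Qb ⟨3, by omega⟩ = Hss.e3 from QbThree]; rfl⟩
    have hw : ∀ b : Hss, sharpSS k1 k2 k3 k4 l1 l2 l3 l4 b H4.w ∈ Submodule.span ℝ (Set.range
      ![(sharpSS k1 k2 k3 k4 l1 l2 l3 l4) 1 H4.u, (sharpSS k1 k2 k3 k4 l1 l2 l3 l4) Hss.e1 H4.u, (sharpSS k1 k2 k3 k4 l1 l2 l3 l4) Hss.e2 H4.u, (sharpSS k1 k2 k3 k4 l1 l2 l3 l4) Hss.e3 H4.u,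
        (sharpSS k1 k2 k3 k4 l1 l2 l3 l4) 1 H4.w, (sharpSS k1 k2 k3 k4 l1 l2 l3 l4) Hss.e1 H4.w, (sharpSS k1 k2 k3 k4 l1 l2 l3 l4) Hss.e2 H4.w, (sharpSS k1 k2 k3 k4 l1 l2 l3 l4) Hss.e3 H4.w]) := by
      intro b
      refine mem_of_basis Hss.Qb ((sharpSS k1 k2 k3 k4 l1 l2 l3 l4).flip H4.w) _ ?_ b
      intro i
      rw [LinearMap.flip_apply]
      fin_cases i
      · exact Submodule.subset_span ⟨4, by rw [show Hss.Qb ⟨0, by omega⟩ = (1 : Hss) from QbZero]; rfl⟩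
      · exact Submodule.subset_span ⟨5, by rw [show Hss.Qb ⟨1, by omega⟩ = Hss.e1 from QbOne]; rfl⟩
      · exact Submodule.subset_span ⟨6, by rw [show Hss.Qb ⟨2, by omega⟩ = Hss.e2 from QbTwo]; rfl⟩
      · exact Submodule.subset_span ⟨7, by rw [show Hss.Qb ⟨3, by omega⟩ = Hss.e3 from QbThree]; rfl⟩
    refine mem_of_basis H4.B (sharpSS k1 k2 k3 k4 l1 l2 l3 l4 a) _ ?_ h
    intro j
    fin_cases j
    · exact hu a
    · show sharpSS k1 k2 k3 k4 l1 l2 l3 l4 a H4.g ∈ _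
      rw [sharp_g]; exact zero_mem _
    · show sharpSS k1 k2 k3 k4 l1 l2 l3 l4 a H4.v ∈ _
      rw [sharp_v, ← sharp_u]; exact hu _
    · exact hw a

/-- The elements `1♯1, e₁♯1, e₂♯1, e₃♯1, 1♯gν, e₁♯gν, e₂♯gν, e₃♯gν`
form a basis of the partial crossed product `H_ss ♯ H₄`, the span of all `a ♯ h`;
in particular it has dimension 8. -/
theorem sharpSS_basis :
    LinearIndependent ℝ
      ![(sharpSS k1 k2 k3 k4 l1 l2 l3 l4) 1 H4.u, (sharpSS k1 k2 k3 k4 l1 l2 l3 l4) Hss.e1 H4.u, (sharpSS k1 k2 k3 k4 l1 l2 l3 l4) Hss.e2 H4.u, (sharpSS k1 k2 k3 k4 l1 l2 l3 l4) Hss.e3 H4.u,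
        (sharpSS k1 k2 k3 k4 l1 l2 l3 l4) 1 H4.w, (sharpSS k1 k2 k3 k4 l1 l2 l3 l4) Hss.e1 H4.w, (sharpSS k1 k2 k3 k4 l1 l2 l3 l4) Hss.e2 H4.w, (sharpSS k1 k2 k3 k4 l1 l2 l3 l4) Hss.e3 H4.w] ∧
    Submodule.span ℝ (Set.range
      ![(sharpSS k1 k2 k3 k4 l1 l2 l3 l4) 1 H4.u, (sharpSS k1 k2 k3 k4 l1 l2 l3 l4) Hss.e1 H4.u, (sharpSS k1 k2 k3 k4 l1 l2 l3 l4) Hss.e2 H4.u, (sharpSS k1 k2 k3 k4 l1 l2 l3 l4) Hss.e3 H4.u,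
        (sharpSS k1 k2 k3 k4 l1 l2 l3 l4) 1 H4.w, (sharpSS k1 k2 k3 k4 l1 l2 l3 l4) Hss.e1 H4.w, (sharpSS k1 k2 k3 k4 l1 l2 l3 l4) Hss.e2 H4.w, (sharpSS k1 k2 k3 k4 l1 l2 l3 l4) Hss.e3 H4.w]) =
      Submodule.span ℝ {x : Hss ⊗[ℝ] H4 | ∃ (a : Hss) (h : H4), x = (sharpSS k1 k2 k3 k4 l1 l2 l3 l4) a h} ∧
    Module.finrank ℝ
      (Submodule.span ℝ {x : Hss ⊗[ℝ] H4 | ∃ (a : Hss) (h : H4), x = (sharpSS k1 k2 k3 k4 l1 l2 l3 l4) a h}) = 8 := by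
  refine ⟨sharpSS_indep k1 k2 k3 k4 l1 l2 l3 l4, sharpSS_span k1 k2 k3 k4 l1 l2 l3 l4, ?_⟩
  rw [← sharpSS_span k1 k2 k3 k4 l1 l2 l3 l4,
    finrank_span_eq_card (sharpSS_indep k1 k2 k3 k4 l1 l2 l3 l4)]
  simp
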